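/- For γ ≥ 2 and all ρ, R in [0, r₂], there exists C depending only on r₂, γ such that (R^(γ-1) - ρ^(γ-1))² ≤ C (R^γ - (γ/(γ-1)) ρ R^(γ-1) + (1/(γ-1)) ρ^γ). -/

import Mathlib

set_option maxHeartbeats 1000000
open Real Set

lemma tangent {p x y : ℝ} (hp : 1 ≤ p) (hx : 0 ≤ x) (hy : 0 < y) :
    y ^ p + p * y ^ (p - 1) * (x - y) ≤ x ^ p := by
  have hs : -1 ≤ (x - y) / y := by
    rw [le_div_iff₀ hy]; nlinarith
  have hB := one_add_mul_self_le_rpow_one_add hs hp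
  have h1 : 1 + (x - y) / y = x / y := by field_simp; ring
  rw [h1, Real.div_rpow hx hy.le] at hB
  have hyp : (0:ℝ) < y ^ p := Real.rpow_pos_of_pos hy p
  have h2 : y ^ (p - 1) = y ^ p / y := Real.rpow_sub_one hy.ne' p
  rw [h2]
  have := mul_le_mul_of_nonneg_left hB hyp.le
  calc y ^ p + p * (y ^ p / y) * (x - y)
      = y ^ p * (1 + p * ((x - y) / y)) := by field_simp
    _ ≤ y ^ p * (x ^ p / y ^ p) := this
    _ = x ^ p := by field_simp

lemma tangent' {p x y : ℝ} (hp : 1 < p) (hx : 0 ≤ x) (hy : 0 ≤ y) :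
    y ^ p + p * y ^ (p - 1) * (x - y) ≤ x ^ p := by
  rcases hy.eq_or_lt with h | h
  · rw [← h, Real.zero_rpow (by positivity : p ≠ 0),
      Real.zero_rpow (show p - 1 ≠ 0 by intro h0; nlinarith)]
    simpa using Real.rpow_nonneg hx p
  · exact tangent hp.le hx h

lemma rpow_split {x p : ℝ} (hx : 0 ≤ x) (hp : 1 ≤ p) : x ^ p = x ^ (p - 1) * x := by
  rcases hx.eq_or_lt with h | h
  · rw [← h, Real.zero_rpow (show p ≠ 0 by intro h0; linarith), mul_zero]
  · have h2 := Real.rpow_add_one h.ne' (p - 1)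
    rw [sub_add_cancel] at h2
    exact h2

lemma karamata {p x y x' y' : ℝ} (hp : 1 ≤ p) (hy' : 0 ≤ y') (h1 : y' ≤ y)
    (h2 : y ≤ x) (h3 : x ≤ x') (hsum : x + y = x' + y') :
    x ^ p + y ^ p ≤ x' ^ p + y' ^ p := by
  rcases eq_or_lt_of_le (h1.trans (h2.trans h3)) with heq | hlt
  · have e1 : y = y' := le_antisymm (by linarith) h1
    have e2 : x = x' := by linarith
    rw [e1, e2]
  · have hd : (0:ℝ) < x' - y' := by linarith
    have hconv := convexOn_rpow hp
    set a : ℝ := (x' - x) / (x' - y') with ha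
    set b : ℝ := (x' - y) / (x' - y') with hb
    have ha0 : 0 ≤ a := div_nonneg (by linarith) hd.le
    have ha1 : 0 ≤ 1 - a := by
      have : a ≤ 1 := by rw [ha, div_le_one hd]; linarith
      linarith
    have hb0 : 0 ≤ b := div_nonneg (by linarith) hd.le
    have hb1 : 0 ≤ 1 - b := by
      have : b ≤ 1 := by rw [hb, div_le_one hd]; linarith
      linarith
    have hy'm : y' ∈ Ici (0:ℝ) := hy'
    have hx'm : x' ∈ Ici (0:ℝ) := by simp only [Set.mem_Ici]; linarith
    have hX := hconv.2 hy'm hx'm ha0 ha1 (by ring)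
    have hY := hconv.2 hy'm hx'm hb0 hb1 (by ring)
    have ex : a • y' + (1 - a) • x' = x := by
      rw [ha, smul_eq_mul, smul_eq_mul, div_mul_eq_mul_div, one_sub_div hd.ne', div_mul_eq_mul_div,
        ← add_div, div_eq_iff hd.ne']; ring
    have ey : b • y' + (1 - b) • x' = y := by
      rw [hb, smul_eq_mul, smul_eq_mul, div_mul_eq_mul_div, one_sub_div hd.ne', div_mul_eq_mul_div,
        ← add_div, div_eq_iff hd.ne']; ring
    rw [ex] at hX; rw [ey] at hY
    have hab : a + b = 1 := by rw [ha, hb]; field_simp; linarith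
    simp only [smul_eq_mul] at hX hY
    have hs := add_le_add hX hY
    have he : a * y' ^ p + (1 - a) * x' ^ p + (b * y' ^ p + (1 - b) * x' ^ p)
        = y' ^ p + x' ^ p := by linear_combination (y' ^ p - x' ^ p) * hab
    linarith [hs, he]

theorem stmt3 (γ r₂ : ℝ) (hγ : 2 ≤ γ) (hr₂ : 0 < r₂) :
    ∃ C : ℝ, 0 < C ∧ ∀ ρ R : ℝ, ρ ∈ Icc 0 r₂ → R ∈ Icc 0 r₂ →
      (R ^ (γ - 1) - ρ ^ (γ - 1)) ^ 2 ≤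
        C * (R ^ γ - (γ / (γ - 1)) * ρ * R ^ (γ - 1) + (1 / (γ - 1)) * ρ ^ γ) := by
  have hγ1 : (1:ℝ) ≤ γ - 1 := by linarith
  have hγ1pos : (0:ℝ) < γ - 1 := by linarith
  have hγpos : (0:ℝ) < γ := by linarith
  refine ⟨2 ^ γ * (γ - 1) ^ 2 * r₂ ^ (γ - 2), by positivity, ?_⟩
  intro ρ R hρ hR
  obtain ⟨hρ0, hρ2⟩ := hρ
  obtain ⟨hR0, hR2⟩ := hR
  set K := r₂ ^ (γ - 2) with hKdef
  have hKpos : 0 < K := Real.rpow_pos_of_pos hr₂ _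
  set T := (2:ℝ) ^ (γ - 1) with hTdef
  have hTpos : 0 < T := Real.rpow_pos_of_pos (by norm_num) _
  have h2T : (2:ℝ) ^ γ = 2 * T := by
    rw [hTdef, Real.rpow_sub_one (by norm_num : (2:ℝ) ≠ 0) γ]; ring
  have hPD : R ^ γ - (γ / (γ - 1)) * ρ * R ^ (γ - 1) + (1 / (γ - 1)) * ρ ^ γ
      = (ρ ^ γ - γ * ρ * R ^ (γ - 1) + (γ - 1) * R ^ γ) / (γ - 1) := by
    field_simp; ring
  rw [hPD, h2T, ← mul_div_assoc, le_div_iff₀ hγ1pos]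
  have hRγ : γ * R ^ γ = γ * (R ^ (γ - 1) * R) := by
    rw [← rpow_split hR0 (by linarith : (1:ℝ) ≤ γ)]
  rcases le_total ρ R with hle | hle
  · -- ρ ≤ R
    rcases hR0.eq_or_lt with hR0' | hRpos
    · have hρz : ρ = 0 := le_antisymm (by linarith) hρ0
      rw [← hR0', hρz, Real.zero_rpow (show γ - 1 ≠ 0 by positivity),
        Real.zero_rpow (show γ ≠ 0 by positivity)]
      norm_num
    · have hm0 : (0:ℝ) < (R + ρ) / 2 := by linarith
      have hmR : (R + ρ) / 2 ≤ R := by linarith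
      have F1 := tangent (by linarith : (1:ℝ) ≤ γ) hm0.le hRpos
      have F2 := tangent (by linarith : (1:ℝ) ≤ γ) hρ0 hm0
      have hD : γ * (R ^ (γ-1) - ((R + ρ) / 2) ^ (γ-1)) * (R - ρ) / 2
          ≤ ρ ^ γ - γ * ρ * R ^ (γ - 1) + (γ - 1) * R ^ γ := by
        linarith [F1, F2, hRγ]
      have Kar : (R + ρ) ^ (γ-1) + R ^ (γ-1) ≤ (2*R) ^ (γ-1) + ρ ^ (γ-1) :=
        karamata hγ1 hρ0 hle (by linarith) (by linarith) (by ring)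
      have e1 : (R + ρ) ^ (γ-1) = T * ((R + ρ) / 2) ^ (γ-1) := by
        conv_lhs => rw [show R + ρ = 2 * ((R + ρ) / 2) by ring]
        rw [Real.mul_rpow (by norm_num) hm0.le, hTdef]
      have e2 : (2*R) ^ (γ-1) = T * R ^ (γ-1) := by
        rw [Real.mul_rpow (by norm_num) hR0, hTdef]
      rw [e1, e2] at Kar
      have hu2 : R ^ (γ-1) - ρ ^ (γ-1) ≤ T * (R ^ (γ-1) - ((R + ρ) / 2) ^ (γ-1)) := by
        linarith [Kar]
      have F4 := tangent hγ1 hρ0 hRpos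
      have hK : R ^ (γ - 1 - 1) ≤ K := by
        rw [show γ - 1 - 1 = γ - 2 by ring, hKdef]
        exact Real.rpow_le_rpow hR0 hR2 (by linarith)
      have hu1 : R ^ (γ-1) - ρ ^ (γ-1) ≤ (γ-1) * K * (R - ρ) := by
        nlinarith [F4, mul_nonneg (mul_nonneg hγ1pos.le (sub_nonneg.2 hK))
          (sub_nonneg.2 hle)]
      have hu0 : 0 ≤ R ^ (γ-1) - ρ ^ (γ-1) :=
        sub_nonneg.2 (Real.rpow_le_rpow hρ0 hle (by linarith))
      have hw0 : 0 ≤ R - ρ := sub_nonneg.2 hle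
      have step1 : (R ^ (γ-1) - ρ ^ (γ-1)) ^ 2
          ≤ ((γ-1) * K * (R - ρ)) * (T * (R ^ (γ-1) - ((R + ρ) / 2) ^ (γ-1))) := by
        rw [sq]
        exact mul_le_mul hu1 hu2 hu0
          (mul_nonneg (mul_nonneg hγ1pos.le hKpos.le) hw0)
      have s2 := mul_le_mul_of_nonneg_left step1 (mul_nonneg hγpos.le hγ1pos.le)
      have s3 := mul_le_mul_of_nonneg_left hD
        (mul_nonneg (mul_nonneg (mul_nonneg (by norm_num : (0:ℝ) ≤ 2)
          (sq_nonneg (γ-1))) hKpos.le) hTpos.le)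
      have hmain : γ * (γ-1) * (R ^ (γ-1) - ρ ^ (γ-1)) ^ 2
          ≤ 2 * T * (γ-1)^2 * K * (ρ ^ γ - γ * ρ * R ^ (γ - 1) + (γ - 1) * R ^ γ) := by
        linarith [s2, s3]
      linarith [hmain, sq_nonneg ((γ-1) * (R ^ (γ-1) - ρ ^ (γ-1)))]
  · -- R ≤ ρ
    rcases hρ0.eq_or_lt with hρ0' | hρpos
    · have hRz : R = 0 := le_antisymm (by linarith) hR0
      rw [← hρ0', hRz, Real.zero_rpow (show γ - 1 ≠ 0 by positivity),
        Real.zero_rpow (show γ ≠ 0 by positivity)]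
      norm_num
    · have hm0 : (0:ℝ) < (R + ρ) / 2 := by linarith
      have hRm : R ≤ (R + ρ) / 2 := by linarith
      have F1 := tangent' (by linarith : (1:ℝ) < γ) hm0.le hR0
      have F2 := tangent (by linarith : (1:ℝ) ≤ γ) hρ0 hm0
      have hD : γ * (((R + ρ) / 2) ^ (γ-1) - R ^ (γ-1)) * (ρ - R) / 2
          ≤ ρ ^ γ - γ * ρ * R ^ (γ - 1) + (γ - 1) * R ^ γ := by
        linarith [F1, F2, hRγ]
      have Kar : (2*R) ^ (γ-1) + ρ ^ (γ-1) ≤ (ρ + R) ^ (γ-1) + R ^ (γ-1) := by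
        rcases le_total (2*R) ρ with h2R | h2R
        · have := karamata (p := γ-1) (x := ρ) (y := 2*R) (x' := ρ+R) (y' := R)
            hγ1 hR0 (by linarith) h2R (by linarith) (by ring)
          linarith
        · have := karamata (p := γ-1) (x := 2*R) (y := ρ) (x' := ρ+R) (y' := R)
            hγ1 hR0 hle h2R (by linarith) (by ring)
          linarith
      have e1 : (ρ + R) ^ (γ-1) = T * ((R + ρ) / 2) ^ (γ-1) := by
        conv_lhs => rw [show ρ + R = 2 * ((R + ρ) / 2) by ring]
        rw [Real.mul_rpow (by norm_num) hm0.le, hTdef]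
      have e2 : (2*R) ^ (γ-1) = T * R ^ (γ-1) := by
        rw [Real.mul_rpow (by norm_num) hR0, hTdef]
      rw [e1, e2] at Kar
      have hu2 : ρ ^ (γ-1) - R ^ (γ-1) ≤ T * (((R + ρ) / 2) ^ (γ-1) - R ^ (γ-1)) := by
        linarith [Kar]
      have F4 := tangent hγ1 hR0 hρpos
      have hK : ρ ^ (γ - 1 - 1) ≤ K := by
        rw [show γ - 1 - 1 = γ - 2 by ring, hKdef]
        exact Real.rpow_le_rpow hρ0 hρ2 (by linarith)
      have hu1 : ρ ^ (γ-1) - R ^ (γ-1) ≤ (γ-1) * K * (ρ - R) := by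
        nlinarith [F4, mul_nonneg (mul_nonneg hγ1pos.le (sub_nonneg.2 hK))
          (sub_nonneg.2 hle)]
      have hu0 : 0 ≤ ρ ^ (γ-1) - R ^ (γ-1) :=
        sub_nonneg.2 (Real.rpow_le_rpow hR0 hle (by linarith))
      have hw0 : 0 ≤ ρ - R := sub_nonneg.2 hle
      have step1 : (ρ ^ (γ-1) - R ^ (γ-1)) ^ 2
          ≤ ((γ-1) * K * (ρ - R)) * (T * (((R + ρ) / 2) ^ (γ-1) - R ^ (γ-1))) := by
        rw [sq]
        exact mul_le_mul hu1 hu2 hu0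
          (mul_nonneg (mul_nonneg hγ1pos.le hKpos.le) hw0)
      have s2 := mul_le_mul_of_nonneg_left step1 (mul_nonneg hγpos.le hγ1pos.le)
      have s3 := mul_le_mul_of_nonneg_left hD
        (mul_nonneg (mul_nonneg (mul_nonneg (by norm_num : (0:ℝ) ≤ 2)
          (sq_nonneg (γ-1))) hKpos.le) hTpos.le)
      have hmain : γ * (γ-1) * (ρ ^ (γ-1) - R ^ (γ-1)) ^ 2
          ≤ 2 * T * (γ-1)^2 * K * (ρ ^ γ - γ * ρ * R ^ (γ - 1) + (γ - 1) * R ^ γ) := by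
        linarith [s2, s3]
      linarith [hmain, sq_nonneg ((γ-1) * (ρ ^ (γ-1) - R ^ (γ-1)))]
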